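/- Let M = ⊕_{i∈I} M_i with Hom_R(M_i, M_j) = 0 for all i ≠ j. If each M_i is a Baer R-module, then M is a Baer R-module. -/

import Mathlib

universe u v w

/-- `M` is a Baer module: the common kernel of any set of endomorphisms
is a direct summand of `M`. -/
def IsBaerModule (R : Type u) [Ring R] (M : Type v) [AddCommGroup M]
    [Module R M] : Prop :=
  ∀ X : Set (Module.End R M), ∃ p : Submodule R M,
    IsCompl (⨅ f ∈ X, LinearMap.ker f) p

section aux
variable {R : Type u} [Ring R] {N : Type*} [AddCommGroup N] [Module R N]

theorem idem_isCompl (g : Module.End R N) (h : g ∘ₗ g = g) :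
    IsCompl (LinearMap.ker g) (LinearMap.range g) := by
  constructor
  · rw [disjoint_iff, Submodule.eq_bot_iff]
    rintro x ⟨hk, y, rfl⟩
    have : g (g y) = g y := congrFun (congrArg DFunLike.coe h) y
    simpa [this] using hk
  · rw [codisjoint_iff, Submodule.eq_top_iff']
    intro x
    have : x = (x - g x) + g x := by abel
    rw [this]
    exact Submodule.add_mem_sup (by rw [LinearMap.mem_ker, map_sub, sub_eq_zero]; exact (congrFun (congrArg DFunLike.coe h) x).symm) ⟨x, rfl⟩
end aux

theorem stmt9 (R : Type u) [Ring R] (ι : Type w) [DecidableEq ι]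
    (M : ι → Type v) [∀ i, AddCommGroup (M i)] [∀ i, Module R (M i)]
    (hhom : ∀ i j, i ≠ j → ∀ f : M i →ₗ[R] M j, f = 0)
    (hbaer : ∀ i, IsBaerModule R (M i)) :
    IsBaerModule R (DirectSum ι M) := by
  intro X
  -- component maps
  set c : Module.End R (DirectSum ι M) → ∀ i, Module.End R (M i) :=
    fun f i => (DirectSum.component R ι M i) ∘ₗ f ∘ₗ DirectSum.lof R ι M i with hc
  -- every f is diagonal
  have key : ∀ (g : ∀ i, Module.End R (M i)) (y : DirectSum ι M) (j : ι),
      (DFinsupp.mapRange.linearMap g : DirectSum ι M →ₗ[R] DirectSum ι M) y j = g j (y j) :=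
    fun g y j => DFinsupp.mapRange_apply _ (fun i => (g i).map_zero) y j
  have hdiag : ∀ f : Module.End R (DirectSum ι M),
      f = (DFinsupp.mapRange.linearMap (c f) : DirectSum ι M →ₗ[R] DirectSum ι M) := by
    intro f
    refine DirectSum.linearMap_ext R fun i => ?_
    ext x : 1
    refine DFinsupp.ext fun j => ?_
    simp only [LinearMap.comp_apply]
    change (f ((DirectSum.lof R ι M i) x)) j =
      DFinsupp.mapRange (fun i x => c f i x) (fun i => (c f i).map_zero)
        ((DirectSum.lof R ι M i) x) j
    rw [DFinsupp.mapRange_apply]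
    by_cases hij : i = j
    · subst hij
      rw [hc]
      simp only [LinearMap.comp_apply, DirectSum.lof_apply]
      exact DirectSum.apply_eq_component R (f ((DirectSum.lof R ι M i) x)) i
    · have h0 : (DirectSum.component R ι M j) ∘ₗ f ∘ₗ DirectSum.lof R ι M i = 0 :=
        hhom i j (fun h => hij h) _
      have h1 := congrFun (congrArg DFunLike.coe h0) x
      simp only [LinearMap.comp_apply, LinearMap.zero_apply] at h1
      rw [DirectSum.lof_eq_of, DirectSum.of_eq_of_ne i j x (Ne.symm hij), map_zero]
      rw [DirectSum.apply_eq_component R]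
      exact h1
  -- Baer complements in each component
  choose p hp using fun i => hbaer i ((fun f => c f i) '' X)
  -- projections with kernel K i
  set e : ∀ i, Module.End R (M i) := fun i =>
    (Submodule.subtype (p i)) ∘ₗ
      (Submodule.projectionOnto (p i) _ (hp i).symm) with he
  have hker : ∀ i, LinearMap.ker (e i) = ⨅ g ∈ (fun f => c f i) '' X, LinearMap.ker g := by
    intro i
    rw [he]
    rw [LinearMap.ker_comp, Submodule.ker_subtype, Submodule.comap_bot,
      Submodule.ker_projectionOnto]
  have hidem : ∀ i, e i ∘ₗ e i = e i := by
    intro i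
    ext x
    simp only [LinearMap.comp_apply, he, Submodule.coe_subtype]
    rw [Submodule.projectionOnto_apply_left]
  -- the diagonal idempotent on the direct sum
  set E : Module.End R (DirectSum ι M) :=
    (DFinsupp.mapRange.linearMap e : DirectSum ι M →ₗ[R] DirectSum ι M) with hE
  have hEapp : ∀ (y : DirectSum ι M) (j : ι), (E y) j = e j (y j) := by
    intro y j
    change DFinsupp.mapRange (fun i x => e i x) (fun i => (e i).map_zero) y j = e j (y j)
    rw [DFinsupp.mapRange_apply]
  have hEidem : E ∘ₗ E = E := by
    refine LinearMap.ext fun x => DFinsupp.ext fun j => ?_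
    rw [LinearMap.comp_apply, hEapp, hEapp]
    exact congrFun (congrArg DFunLike.coe (hidem j)) (x j)
  have hkerE : (⨅ f ∈ X, LinearMap.ker f) = LinearMap.ker E := by
    ext x
    simp only [Submodule.mem_iInf, LinearMap.mem_ker]
    constructor
    · intro h
      refine DFinsupp.ext fun j => ?_
      have hx : x j ∈ LinearMap.ker (e j) := by
        rw [hker j]
        simp only [Submodule.mem_iInf, Set.mem_image, LinearMap.mem_ker]
        rintro g ⟨f, hf, rfl⟩
        have hfx : f x = 0 := h f hf
        have h2 : (DFinsupp.mapRange.linearMap (c f) :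
            DirectSum ι M →ₗ[R] DirectSum ι M) x = 0 :=
          (congrFun (congrArg DFunLike.coe (hdiag f)) x).symm.trans hfx
        exact (DFinsupp.mapRange_apply (fun i x => c f i x)
          (fun i => (c f i).map_zero) x j).symm.trans (congrFun (congrArg DFunLike.coe h2) j)
      rw [hEapp]
      simpa using hx
    · intro h f hf
      have hx : ∀ j, e j (x j) = 0 := fun j => by
        rw [← hEapp, h]; rfl
      have hxK : ∀ j, x j ∈ ⨅ g ∈ (fun f => c f j) '' X, LinearMap.ker g := fun j => by
        rw [← hker j]; exact hx j
      have hcf : ∀ j, c f j (x j) = 0 := fun j => by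
        have := hxK j
        simp only [Submodule.mem_iInf, Set.mem_image, LinearMap.mem_ker] at this
        exact this _ ⟨f, hf, rfl⟩
      rw [hdiag f]
      refine DFinsupp.ext fun j => ?_
      exact (DFinsupp.mapRange_apply (fun i x => c f i x)
        (fun i => (c f i).map_zero) x j).trans (hcf j)
  exact ⟨LinearMap.range E, hkerE ▸ idem_isCompl E hEidem⟩
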